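/- Let H be a connected quasi-transitive digraph with no symmetric arcs that contains a directed cycle and is not an extension of the directed triangle C3. Then H contains four distinct vertices that induce a semicomplete subdigraph containing a directed cycle. -/

import Mathlib

section Aux

variable {V : Type} (A : V → V → Prop)

private lemma tri_aux (hirr : ∀ v, ¬ A v v)
    (hqt : ∀ x y z : V, x ≠ z → A x y → A y z → (A x z ∨ A z x))
    (hasym : ∀ x y : V, A x y → ¬ A y x) :
    ∀ (l : List V) (x y : V), A x y → List.Chain A y l →
      (y :: l).getLast (List.cons_ne_nil _ _) = x → ∃ a b c, A a b ∧ A b c ∧ A c a := by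
  intro l
  induction l with
  | nil =>
    intro x y hxy _ hlast
    simp only [List.getLast_singleton] at hlast
    subst hlast
    exact absurd hxy (hirr _)
  | cons v rest ih =>
    intro x y hxy hch hlast
    rw [List.Chain, List.isChain_cons_cons] at hch
    obtain ⟨hyv, hch⟩ := hch
    have hlast' : (v :: rest).getLast (List.cons_ne_nil _ _) = x := by
      rwa [List.getLast_cons (List.cons_ne_nil _ _)] at hlast
    by_cases hxv : x = v
    · subst hxv; exact absurd hyv (hasym _ _ hxy)
    · rcases hqt x y v hxv hxy hyv with h | h
      · exact ih x v h hch hlast'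
      · exact ⟨x, y, v, hxy, hyv, h⟩

private lemma classify (hirr : ∀ v, ¬ A v v)
    (hqt : ∀ x y z : V, x ≠ z → A x y → A y z → (A x z ∨ A z x))
    (hasym : ∀ x y : V, A x y → ¬ A y x)
    {a b c : V} (hab : A a b) (hbc : A b c) (hca : A c a)
    (no4 : ∀ p q r d : V, A p q → A q r → A r p →
      (A d p ∨ A p d) → (A d q ∨ A q d) → (A d r ∨ A r d) →
      d ≠ p → d ≠ q → d ≠ r → False)
    {u : V} (h : A u a ∨ A a u) :
    (A c u ∧ A u b) ∨ (A a u ∧ A u c) ∨ (A b u ∧ A u a) := by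
  have hua : u ≠ a := by rintro rfl; rcases h with h | h <;> exact hirr _ h
  rcases h with hua' | hau
  · by_cases hub : u = b
    · subst hub; exact absurd hua' (hasym _ _ hab)
    by_cases huc : u = c
    · subst huc; exact Or.inr (Or.inr ⟨hbc, hca⟩)
    rcases hqt u a b hub hua' hab with h1 | h1
    · rcases hqt u b c huc h1 hbc with h2 | h2
      · exact (no4 a b c u hab hbc hca (Or.inl hua') (Or.inl h1) (Or.inl h2) hua hub huc).elim
      · exact Or.inl ⟨h2, h1⟩
    · exact Or.inr (Or.inr ⟨h1, hua'⟩)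
  · by_cases hub : u = b
    · subst hub; exact Or.inr (Or.inl ⟨hab, hbc⟩)
    by_cases huc : u = c
    · subst huc; exact absurd hau (hasym _ _ hca)
    rcases hqt c a u (Ne.symm huc) hca hau with h1 | h1
    · rcases hqt b c u (Ne.symm hub) hbc h1 with h2 | h2
      · exact (no4 a b c u hab hbc hca (Or.inr hau) (Or.inr h2) (Or.inr h1) hua hub huc).elim
      · exact Or.inl ⟨h1, h2⟩
    · exact Or.inr (Or.inl ⟨hau, h1⟩)

private lemma stepL (hirr : ∀ v, ¬ A v v)
    (hqt : ∀ x y z : V, x ≠ z → A x y → A y z → (A x z ∨ A z x))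
    (hasym : ∀ x y : V, A x y → ¬ A y x)
    {a b c : V} (hab : A a b) (hbc : A b c) (hca : A c a)
    (no4 : ∀ p q r d : V, A p q → A q r → A r p →
      (A d p ∨ A p d) → (A d q ∨ A q d) → (A d r ∨ A r d) →
      d ≠ p → d ≠ q → d ≠ r → False)
    {v u : V} (hcv : A c v) (hvb : A v b) (h : A v u ∨ A u v) :
    (A c u ∧ A u b) ∨ (A a u ∧ A u c) ∨ (A b u ∧ A u a) := by
  rcases h with hvu | huv
  · have hne : c ≠ u := by rintro rfl; exact hasym _ _ hcv hvu
    have h2 := hqt c v u hne hcv hvu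
    have h3 := classify A hirr hqt hasym hca hab hbc no4 (Or.symm h2)
    tauto
  · have hne : u ≠ b := by rintro rfl; exact hasym _ _ hvb huv
    have h2 := hqt u v b hne huv hvb
    have h3 := classify A hirr hqt hasym hbc hca hab no4 h2
    tauto

private lemma F1 (hirr : ∀ v, ¬ A v v)
    {b c : V} (hbc : A b c)
    (no4 : ∀ p q r d : V, A p q → A q r → A r p →
      (A d p ∨ A p d) → (A d q ∨ A q d) → (A d r ∨ A r d) →
      d ≠ p → d ≠ q → d ≠ r → False)
    {u w : V} (huw : A u w)
    (hcu : A c u) (hub : A u b) (hcw : A c w) (hwb : A w b) : False :=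
  no4 w b c u hwb hbc hcw (Or.inl huw) (Or.inl hub) (Or.inr hcu)
    (by rintro rfl; exact hirr _ huw) (by rintro rfl; exact hirr _ hub)
    (by rintro rfl; exact hirr _ hcu)

private lemma F3 (hirr : ∀ v, ¬ A v v)
    (hqt : ∀ x y z : V, x ≠ z → A x y → A y z → (A x z ∨ A z x))
    (hasym : ∀ x y : V, A x y → ¬ A y x)
    {a b c : V} (hab : A a b)
    (no4 : ∀ p q r d : V, A p q → A q r → A r p →
      (A d p ∨ A p d) → (A d q ∨ A q d) → (A d r ∨ A r d) →
      d ≠ p → d ≠ q → d ≠ r → False)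
    {u w : V} (huw : A u w)
    (hcu : A c u) (hub : A u b) (hbw : A b w) (hwa : A w a) : False := by
  have hua : u ≠ a := by rintro rfl; exact hasym _ _ hwa huw
  have hadj := hqt u w a hua huw hwa
  exact no4 w a b u hwa hab hbw (Or.inl huw) hadj (Or.inl hub)
    (by rintro rfl; exact hirr _ huw) hua (by rintro rfl; exact hirr _ hub)

private lemma lemB (hirr : ∀ v, ¬ A v v)
    (hqt : ∀ x y z : V, x ≠ z → A x y → A y z → (A x z ∨ A z x))
    (hasym : ∀ x y : V, A x y → ¬ A y x)
    {b c : V} (hbc : A b c)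
    (no4 : ∀ p q r d : V, A p q → A q r → A r p →
      (A d p ∨ A p d) → (A d q ∨ A q d) → (A d r ∨ A r d) →
      d ≠ p → d ≠ q → d ≠ r → False)
    {u w : V} (hcu : A c u) (hub : A u b) (hwc : A w c) : A u w := by
  have hwu : w ≠ u := by rintro rfl; exact hasym _ _ hwc hcu
  rcases hqt w c u hwu hwc hcu with hwu' | h
  · exfalso
    have hwb : w ≠ b := by rintro rfl; exact hasym _ _ hub hwu'
    have hadjb := hqt w u b hwb hwu' hub
    exact no4 u b c w hub hbc hcu (Or.inl hwu') hadjb (Or.inl hwc)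
      hwu hwb (by rintro rfl; exact hirr _ hwc)
  · exact h

end Aux

/-- A connected quasi-transitive digraph without symmetric arcs that
contains a directed cycle and is not an extension of the directed triangle `C3` has four
distinct vertices inducing a semicomplete subdigraph that contains a directed cycle. -/
theorem stmt_17 {V : Type} [Fintype V] (A : V → V → Prop)
    (hirr : ∀ v, ¬ A v v)
    (hqt : ∀ x y z : V, x ≠ z → A x y → A y z → (A x z ∨ A z x))
    (hasym : ∀ x y : V, A x y → ¬ A y x)
    (hconn : ∀ x y : V, Relation.ReflTransGen (fun u w => A u w ∨ A w u) x y)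
    (hcyc : ∃ x y : V, A x y ∧ Relation.ReflTransGen A y x)
    (hnotext : ¬ ∃ X : V → Fin 3, (∀ i : Fin 3, ∃ u, X u = i) ∧
        (∀ u w : V, A u w ↔ X w = X u + 1)) :
    ∃ a b c d : V, a ≠ b ∧ a ≠ c ∧ a ≠ d ∧ b ≠ c ∧ b ≠ d ∧ c ≠ d ∧
      (∀ p ∈ ({a, b, c, d} : Set V), ∀ q ∈ ({a, b, c, d} : Set V), p ≠ q →
        (A p q ∨ A q p)) ∧
      (∃ p q : V, p ∈ ({a, b, c, d} : Set V) ∧ q ∈ ({a, b, c, d} : Set V) ∧ A p q ∧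
        Relation.ReflTransGen
          (fun u w => u ∈ ({a, b, c, d} : Set V) ∧ w ∈ ({a, b, c, d} : Set V) ∧ A u w)
          q p) := by
  classical
  by_contra hF
  have no4 : ∀ p q r d : V, A p q → A q r → A r p →
      (A d p ∨ A p d) → (A d q ∨ A q d) → (A d r ∨ A r d) →
      d ≠ p → d ≠ q → d ≠ r → False := by
    intro p q r d hpq hqr hrp h1 h2 h3 hdp hdq hdr
    have hpq' : p ≠ q := by rintro rfl; exact hirr _ hpq
    have hqr' : q ≠ r := by rintro rfl; exact hirr _ hqr
    have hpr' : p ≠ r := by rintro rfl; exact hirr _ hrp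
    apply hF
    refine ⟨p, q, r, d, hpq', hpr', Ne.symm hdp, hqr', Ne.symm hdq, Ne.symm hdr, ?_, ?_⟩
    · intro x hx y hy hxy
      simp only [Set.mem_insert_iff, Set.mem_singleton_iff] at hx hy
      rcases hx with rfl | rfl | rfl | rfl <;> rcases hy with rfl | rfl | rfl | rfl <;> tauto
    · refine ⟨p, q, by simp, by simp, hpq, ?_⟩
      exact Relation.ReflTransGen.head ⟨by simp, by simp, hqr⟩
        (Relation.ReflTransGen.head ⟨by simp, by simp, hrp⟩ Relation.ReflTransGen.refl)
  obtain ⟨x, y, hxy, hyx⟩ := hcyc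
  obtain ⟨l, hch, hlast⟩ := List.exists_isChain_cons_of_relationReflTransGen hyx
  obtain ⟨a, b, c, hab, hbc, hca⟩ := tri_aux A hirr hqt hasym l x y hxy hch hlast
  have total : ∀ u : V, (A c u ∧ A u b) ∨ (A a u ∧ A u c) ∨ (A b u ∧ A u a) := by
    intro u
    have h := hconn a u
    induction h with
    | refl => exact Or.inl ⟨hca, hab⟩
    | tail h1 h2 ih =>
      rcases ih with ⟨h3, h4⟩ | ⟨h3, h4⟩ | ⟨h3, h4⟩
      · exact stepL A hirr hqt hasym hab hbc hca no4 h3 h4 h2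
      · have := stepL A hirr hqt hasym hbc hca hab no4 h3 h4 h2; tauto
      · have := stepL A hirr hqt hasym hca hab hbc no4 h3 h4 h2; tauto
  let X : V → Fin 3 := fun u => if A c u ∧ A u b then 0 else if A a u ∧ A u c then 1 else 2
  have hX1 : ∀ u, A c u ∧ A u b → X u = 0 := by
    intro u h; simp only [X]; rw [if_pos h]
  have hX2 : ∀ u, A a u ∧ A u c → X u = 1 := by
    intro u h
    have n1 : ¬ (A c u ∧ A u b) := fun h' => hasym _ _ h.2 h'.1
    simp only [X]; rw [if_neg n1, if_pos h]
  have hX3 : ∀ u, A b u ∧ A u a → X u = 2 := by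
    intro u h
    have n1 : ¬ (A c u ∧ A u b) := fun h' => hasym _ _ h'.2 h.1
    have n2 : ¬ (A a u ∧ A u c) := fun h' => hasym _ _ h'.1 h.2
    simp only [X]; rw [if_neg n1, if_neg n2]
  have hX1' : ∀ u, X u = 0 → A c u ∧ A u b := by
    intro u h
    rcases total u with h' | h' | h'
    · exact h'
    · rw [hX2 u h'] at h; exact absurd h (by decide)
    · rw [hX3 u h'] at h; exact absurd h (by decide)
  have hX2' : ∀ u, X u = 1 → A a u ∧ A u c := by
    intro u h
    rcases total u with h' | h' | h'
    · rw [hX1 u h'] at h; exact absurd h (by decide)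
    · exact h'
    · rw [hX3 u h'] at h; exact absurd h (by decide)
  have hX3' : ∀ u, X u = 2 → A b u ∧ A u a := by
    intro u h
    rcases total u with h' | h' | h'
    · rw [hX1 u h'] at h; exact absurd h (by decide)
    · rw [hX2 u h'] at h; exact absurd h (by decide)
    · exact h'
  apply hnotext
  refine ⟨X, ?_, ?_⟩
  · intro i
    fin_cases i
    · exact ⟨a, hX1 a ⟨hca, hab⟩⟩
    · exact ⟨b, hX2 b ⟨hab, hbc⟩⟩
    · exact ⟨c, hX3 c ⟨hbc, hca⟩⟩
  · intro u w
    constructor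
    · intro huw
      rcases total u with hu | hu | hu <;> rcases total w with hw | hw | hw
      · exact (F1 A hirr hbc no4 huw hu.1 hu.2 hw.1 hw.2).elim
      · rw [hX1 u hu, hX2 w hw]; decide
      · exact (F3 A hirr hqt hasym hab no4 huw hu.1 hu.2 hw.1 hw.2).elim
      · exact (F3 A hirr hqt hasym hbc no4 huw hu.1 hu.2 hw.1 hw.2).elim
      · exact (F1 A hirr hca no4 huw hu.1 hu.2 hw.1 hw.2).elim
      · rw [hX2 u hu, hX3 w hw]; decide
      · rw [hX3 u hu, hX1 w hw]; decide
      · exact (F3 A hirr hqt hasym hca no4 huw hu.1 hu.2 hw.1 hw.2).elim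
      · exact (F1 A hirr hab no4 huw hu.1 hu.2 hw.1 hw.2).elim
    · intro h
      rcases total u with hu | hu | hu
      · have h2 : X w = 1 := by rw [h, hX1 u hu]; decide
        have hw := hX2' w h2
        exact lemB A hirr hqt hasym hbc no4 hu.1 hu.2 hw.2
      · have h2 : X w = 2 := by rw [h, hX2 u hu]; decide
        have hw := hX3' w h2
        exact lemB A hirr hqt hasym hca no4 hu.1 hu.2 hw.2
      · have h2 : X w = 0 := by rw [h, hX3 u hu]; decide
        have hw := hX1' w h2
        exact lemB A hirr hqt hasym hab no4 hu.1 hu.2 hw.2
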